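/- Let k be an algebraically closed field of characteristic 2, f = x^2+y^2z+yz^2, m >= 5, and let Z_m^1, Z_m^2 be the irreducible components of the singular fiber S_m^0 defined as the closures of V(J_m^1) ∩ D(z_1) and V(J_m^2) ∩ D(y_1), where J_m^1 = (x_0,x_1,y_0,y_1,z_0)+(f^{(j)}) and J_m^2 = (x_0,x_1,y_0,z_0,z_1)+(f^{(j)}). Then Z_m^1 ∩ Z_m^2 is contained in Z_m^0 = V((x_0,x_1,x_2,y_0,y_1,z_0,z_1)+(f^{(j)})); equivalently, x_2 lies in the radical of I(Z_m^1) + I(Z_m^2). -/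

import Mathlib

open Finset

/-- The universal `m`-jet `∑_{i=0}^m x_i t^i` in the `j`-th coordinate
(`j = 0, 1, 2` for `x, y, z`), with coefficients in
`R_m = k[x_0,...,x_m, y_0,...,y_m, z_0,...,z_m]`. -/
noncomputable def jetSer (k : Type*) [Field k] (m : ℕ) (j : Fin 3) :
    Polynomial (MvPolynomial (Fin 3 × Fin (m + 1)) k) :=
  ∑ i : Fin (m + 1), Polynomial.C (MvPolynomial.X (j, i)) * Polynomial.X ^ (i : ℕ)

/-- The coefficient polynomial `f^{(j)} ∈ R_m` for `f = x^2 + y^2 z + y z^2`. -/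
noncomputable def fC (k : Type*) [Field k] (m j : ℕ) :
    MvPolynomial (Fin 3 × Fin (m + 1)) k :=
  ((jetSer k m 0) ^ 2 + (jetSer k m 1) ^ 2 * jetSer k m 2
    + jetSer k m 1 * (jetSer k m 2) ^ 2).coeff j

lemma jet_coeff (k : Type*) [Field k] (m : ℕ) (j : Fin 3) (n : ℕ) (hn : n ≤ m) :
    (jetSer k m j).coeff n = MvPolynomial.X (j, ⟨n, by omega⟩) := by
  unfold jetSer
  rw [Polynomial.finset_sum_coeff, Finset.sum_eq_single (⟨n, by omega⟩ : Fin (m+1))]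
  · simp
  · intro b _ hb
    simp only [Polynomial.coeff_C_mul, Polynomial.coeff_X_pow]
    rw [if_neg, mul_zero]
    intro h
    exact hb (by ext; simp [h])
  · simp

lemma jet_sq (k : Type*) [Field k] [CharP k 2] (m : ℕ) (j : Fin 3) :
    (jetSer k m j)^2 = ∑ i : Fin (m + 1),
      Polynomial.C (MvPolynomial.X (j, i)^2) * Polynomial.X ^ (2*(i : ℕ)) := by
  unfold jetSer
  rw [sum_pow_char]
  refine Finset.sum_congr rfl fun i _ => ?_
  rw [mul_pow, ← Polynomial.C_pow, ← pow_mul, mul_comm (i:ℕ) 2]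

lemma jet_sq_coeff_even (k : Type*) [Field k] [CharP k 2] (m : ℕ) (j : Fin 3) (n : ℕ) (hn : n ≤ m) :
    ((jetSer k m j)^2).coeff (2*n) = MvPolynomial.X (j, ⟨n, by omega⟩)^2 := by
  rw [jet_sq, Polynomial.finset_sum_coeff, Finset.sum_eq_single (⟨n, by omega⟩ : Fin (m+1))]
  · rw [Polynomial.coeff_C_mul, Polynomial.coeff_X_pow, if_pos rfl, mul_one]
  · intro b _ hb
    simp only [Polynomial.coeff_C_mul, Polynomial.coeff_X_pow]
    rw [if_neg, mul_zero]
    intro h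
    exact hb (by ext; simp; omega)
  · simp

lemma jet_sq_coeff_odd (k : Type*) [Field k] [CharP k 2] (m : ℕ) (j : Fin 3) (n : ℕ) :
    ((jetSer k m j)^2).coeff (2*n+1) = 0 := by
  rw [jet_sq, Polynomial.finset_sum_coeff]
  refine Finset.sum_eq_zero fun b _ => ?_
  simp only [Polynomial.coeff_C_mul, Polynomial.coeff_X_pow]
  rw [if_neg, mul_zero]
  omega

lemma fC4 (k : Type*) [Field k] [CharP k 2] (m : ℕ) (hm : 5 ≤ m) :
    fC k m 4 = MvPolynomial.X (0, ⟨2, Nat.lt_succ_of_le (by omega)⟩)^2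
      + (MvPolynomial.X (1, ⟨0, Nat.lt_succ_of_le (by omega)⟩)^2 * MvPolynomial.X (2, ⟨4, Nat.lt_succ_of_le (by omega)⟩)
        + MvPolynomial.X (1, ⟨1, Nat.lt_succ_of_le (by omega)⟩)^2 * MvPolynomial.X (2, ⟨2, Nat.lt_succ_of_le (by omega)⟩)
        + MvPolynomial.X (1, ⟨2, Nat.lt_succ_of_le (by omega)⟩)^2 * MvPolynomial.X (2, ⟨0, Nat.lt_succ_of_le (by omega)⟩))
      + (MvPolynomial.X (1, ⟨4, Nat.lt_succ_of_le (by omega)⟩) * MvPolynomial.X (2, ⟨0, Nat.lt_succ_of_le (by omega)⟩)^2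
        + MvPolynomial.X (1, ⟨2, Nat.lt_succ_of_le (by omega)⟩) * MvPolynomial.X (2, ⟨1, Nat.lt_succ_of_le (by omega)⟩)^2
        + MvPolynomial.X (1, ⟨0, Nat.lt_succ_of_le (by omega)⟩) * MvPolynomial.X (2, ⟨2, Nat.lt_succ_of_le (by omega)⟩)^2) := by
  have hy0 : ((jetSer k m 1)^2).coeff 0 = MvPolynomial.X (1, ⟨0, Nat.lt_succ_of_le (by omega)⟩)^2 := by
    simpa using jet_sq_coeff_even k m 1 0 (by omega)
  have hy1 : ((jetSer k m 1)^2).coeff 1 = 0 := by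
    simpa using jet_sq_coeff_odd k m 1 0
  have hy2 : ((jetSer k m 1)^2).coeff 2 = MvPolynomial.X (1, ⟨1, Nat.lt_succ_of_le (by omega)⟩)^2 := by
    simpa using jet_sq_coeff_even k m 1 1 (by omega)
  have hy3 : ((jetSer k m 1)^2).coeff 3 = 0 := by
    simpa using jet_sq_coeff_odd k m 1 1
  have hy4 : ((jetSer k m 1)^2).coeff 4 = MvPolynomial.X (1, ⟨2, Nat.lt_succ_of_le (by omega)⟩)^2 := by
    simpa using jet_sq_coeff_even k m 1 2 (by omega)
  have hz0 : ((jetSer k m 2)^2).coeff 0 = MvPolynomial.X (2, ⟨0, Nat.lt_succ_of_le (by omega)⟩)^2 := by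
    simpa using jet_sq_coeff_even k m 2 0 (by omega)
  have hz1 : ((jetSer k m 2)^2).coeff 1 = 0 := by
    simpa using jet_sq_coeff_odd k m 2 0
  have hz2 : ((jetSer k m 2)^2).coeff 2 = MvPolynomial.X (2, ⟨1, Nat.lt_succ_of_le (by omega)⟩)^2 := by
    simpa using jet_sq_coeff_even k m 2 1 (by omega)
  have hz3 : ((jetSer k m 2)^2).coeff 3 = 0 := by
    simpa using jet_sq_coeff_odd k m 2 1
  have hz4 : ((jetSer k m 2)^2).coeff 4 = MvPolynomial.X (2, ⟨2, Nat.lt_succ_of_le (by omega)⟩)^2 := by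
    simpa using jet_sq_coeff_even k m 2 2 (by omega)
  have hx4 : ((jetSer k m 0)^2).coeff 4 = MvPolynomial.X (0, ⟨2, Nat.lt_succ_of_le (by omega)⟩)^2 := by
    simpa using jet_sq_coeff_even k m 0 2 (by omega)
  unfold fC
  rw [Polynomial.coeff_add, Polynomial.coeff_add, hx4,
    Polynomial.coeff_mul, Polynomial.coeff_mul,
    Finset.Nat.sum_antidiagonal_eq_sum_range_succ_mk,
    Finset.Nat.sum_antidiagonal_eq_sum_range_succ_mk]
  simp only [Finset.sum_range_succ, Finset.sum_range_zero]
  norm_num [hy0, hy1, hy2, hy3, hy4, hz0, hz1, hz2, hz3, hz4,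
    jet_coeff k m 1 0 (by omega), jet_coeff k m 1 1 (by omega),
    jet_coeff k m 1 2 (by omega), jet_coeff k m 1 3 (by omega),
    jet_coeff k m 1 4 (by omega),
    jet_coeff k m 2 0 (by omega), jet_coeff k m 2 1 (by omega),
    jet_coeff k m 2 2 (by omega), jet_coeff k m 2 3 (by omega),
    jet_coeff k m 2 4 (by omega)]
  ring

/-- Part of Theorem 3.8: with `J_m^1 = (x_0,x_1,y_0,y_1,z_0) + (f^{(j)})`,
`J_m^2 = (x_0,x_1,y_0,z_0,z_1) + (f^{(j)})`, and `I_m^1`, `I_m^2` their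
saturations (contractions of the extensions to the localizations at `z_1`,
resp. `y_1`), the intersection `Z_m^1 ∩ Z_m^2` is contained in
`Z_m^0 = V((x_0,x_1,x_2,y_0,y_1,z_0,z_1) + (f^{(j)}))`; equivalently, `x_2`
lies in the radical of `I_m^1 + I_m^2`. -/
theorem Zm1_inter_Zm2_subset_Zm0 (k : Type*) [Field k] [IsAlgClosed k]
    [CharP k 2] (m : ℕ) (hm : 5 ≤ m) :
    let R := MvPolynomial (Fin 3 × Fin (m + 1)) k
    let fIdeal : Ideal R := Ideal.span {p : R | ∃ j ≤ m, p = fC k m j}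
    let y1 : R := MvPolynomial.X (1, ⟨1, by omega⟩)
    let z1 : R := MvPolynomial.X (2, ⟨1, by omega⟩)
    let J1 : Ideal R :=
      Ideal.span {MvPolynomial.X (0, ⟨0, by omega⟩), MvPolynomial.X (0, ⟨1, by omega⟩),
          MvPolynomial.X (1, ⟨0, by omega⟩), MvPolynomial.X (1, ⟨1, by omega⟩),
          MvPolynomial.X (2, ⟨0, by omega⟩)} ⊔ fIdeal
    let J2 : Ideal R :=
      Ideal.span {MvPolynomial.X (0, ⟨0, by omega⟩), MvPolynomial.X (0, ⟨1, by omega⟩),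
          MvPolynomial.X (1, ⟨0, by omega⟩), MvPolynomial.X (2, ⟨0, by omega⟩),
          MvPolynomial.X (2, ⟨1, by omega⟩)} ⊔ fIdeal
    let I1 : Ideal R :=
      (J1.map (algebraMap R (Localization.Away z1))).comap
        (algebraMap R (Localization.Away z1))
    let I2 : Ideal R :=
      (J2.map (algebraMap R (Localization.Away y1))).comap
        (algebraMap R (Localization.Away y1))
    let I0 : Ideal R :=
      Ideal.span {MvPolynomial.X (0, ⟨0, by omega⟩), MvPolynomial.X (0, ⟨1, by omega⟩),
          MvPolynomial.X (0, ⟨2, by omega⟩), MvPolynomial.X (1, ⟨0, by omega⟩),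
          MvPolynomial.X (1, ⟨1, by omega⟩), MvPolynomial.X (2, ⟨0, by omega⟩),
          MvPolynomial.X (2, ⟨1, by omega⟩)} ⊔ fIdeal
    (PrimeSpectrum.zeroLocus (I1 : Set R) ∩ PrimeSpectrum.zeroLocus (I2 : Set R)
        ⊆ PrimeSpectrum.zeroLocus (I0 : Set R)) ∧
      MvPolynomial.X (0, ⟨2, by omega⟩) ∈ (I1 ⊔ I2).radical := by
  intro R fIdeal y1 z1 J1 J2 I1 I2 I0
  have hJ1I1 : J1 ≤ I1 := Ideal.le_comap_map
  have hJ2I2 : J2 ≤ I2 := Ideal.le_comap_map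
  -- generators of J1 lie in I1 ⊔ I2
  have hx0 : MvPolynomial.X (0, ⟨0, by omega⟩) ∈ I1 ⊔ I2 :=
    Ideal.mem_sup_left (hJ1I1 (Ideal.mem_sup_left (Ideal.subset_span (by simp))))
  have hx1 : MvPolynomial.X (0, ⟨1, by omega⟩) ∈ I1 ⊔ I2 :=
    Ideal.mem_sup_left (hJ1I1 (Ideal.mem_sup_left (Ideal.subset_span (by simp))))
  have hy0 : MvPolynomial.X (1, ⟨0, by omega⟩) ∈ I1 ⊔ I2 :=
    Ideal.mem_sup_left (hJ1I1 (Ideal.mem_sup_left (Ideal.subset_span (by simp))))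
  have hy1 : MvPolynomial.X (1, ⟨1, by omega⟩) ∈ I1 ⊔ I2 :=
    Ideal.mem_sup_left (hJ1I1 (Ideal.mem_sup_left (Ideal.subset_span (by simp))))
  have hz0 : MvPolynomial.X (2, ⟨0, by omega⟩) ∈ I1 ⊔ I2 :=
    Ideal.mem_sup_left (hJ1I1 (Ideal.mem_sup_left (Ideal.subset_span (by simp))))
  have hz1 : MvPolynomial.X (2, ⟨1, by omega⟩) ∈ I1 ⊔ I2 :=
    Ideal.mem_sup_right (hJ2I2 (Ideal.mem_sup_left (Ideal.subset_span (by simp))))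
  have hfI : fIdeal ≤ I1 ⊔ I2 :=
    le_trans (le_trans le_sup_right hJ1I1) le_sup_left
  have hf4 : fC k m 4 ∈ I1 ⊔ I2 := hfI (Ideal.subset_span ⟨4, by omega, rfl⟩)
  -- the six extra terms of f^{(4)} lie in I1 ⊔ I2
  have hT : (MvPolynomial.X (1, ⟨0, by omega⟩)^2 * MvPolynomial.X (2, ⟨4, by omega⟩)
        + MvPolynomial.X (1, ⟨1, by omega⟩)^2 * MvPolynomial.X (2, ⟨2, by omega⟩)
        + MvPolynomial.X (1, ⟨2, by omega⟩)^2 * MvPolynomial.X (2, ⟨0, by omega⟩))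
      + (MvPolynomial.X (1, ⟨4, by omega⟩) * MvPolynomial.X (2, ⟨0, by omega⟩)^2
        + MvPolynomial.X (1, ⟨2, by omega⟩) * MvPolynomial.X (2, ⟨1, by omega⟩)^2
        + MvPolynomial.X (1, ⟨0, by omega⟩) * MvPolynomial.X (2, ⟨2, by omega⟩)^2)
      ∈ I1 ⊔ I2 := by
    refine add_mem (add_mem (add_mem ?_ ?_) ?_) (add_mem (add_mem ?_ ?_) ?_)
    · exact Ideal.mul_mem_right _ _ (Ideal.pow_mem_of_mem _ hy0 2 two_pos)
    · exact Ideal.mul_mem_right _ _ (Ideal.pow_mem_of_mem _ hy1 2 two_pos)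
    · exact Ideal.mul_mem_left _ _ hz0
    · exact Ideal.mul_mem_left _ _ (Ideal.pow_mem_of_mem _ hz0 2 two_pos)
    · exact Ideal.mul_mem_left _ _ (Ideal.pow_mem_of_mem _ hz1 2 two_pos)
    · exact Ideal.mul_mem_right _ _ hy0
  have hx2sq : MvPolynomial.X (0, ⟨2, by omega⟩)^2 ∈ I1 ⊔ I2 := by
    have heq : MvPolynomial.X (0, ⟨2, by omega⟩)^2
        = fC k m 4 - ((MvPolynomial.X (1, ⟨0, by omega⟩)^2 * MvPolynomial.X (2, ⟨4, by omega⟩)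
        + MvPolynomial.X (1, ⟨1, by omega⟩)^2 * MvPolynomial.X (2, ⟨2, by omega⟩)
        + MvPolynomial.X (1, ⟨2, by omega⟩)^2 * MvPolynomial.X (2, ⟨0, by omega⟩))
      + (MvPolynomial.X (1, ⟨4, by omega⟩) * MvPolynomial.X (2, ⟨0, by omega⟩)^2
        + MvPolynomial.X (1, ⟨2, by omega⟩) * MvPolynomial.X (2, ⟨1, by omega⟩)^2
        + MvPolynomial.X (1, ⟨0, by omega⟩) * MvPolynomial.X (2, ⟨2, by omega⟩)^2)) := by
      rw [fC4 k m hm]; ring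
    rw [heq]
    exact sub_mem hf4 hT
  have hx2 : MvPolynomial.X (0, ⟨2, by omega⟩) ∈ (I1 ⊔ I2).radical := ⟨2, hx2sq⟩
  refine ⟨?_, hx2⟩
  have hI0 : I0 ≤ (I1 ⊔ I2).radical := by
    refine sup_le (Ideal.span_le.2 ?_) (le_trans hfI Ideal.le_radical)
    intro x hx
    simp only [Set.mem_insert_iff, Set.mem_singleton_iff] at hx
    rcases hx with rfl | rfl | rfl | rfl | rfl | rfl | rfl
    · exact Ideal.le_radical hx0
    · exact Ideal.le_radical hx1
    · exact hx2
    · exact Ideal.le_radical hy0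
    · exact Ideal.le_radical hy1
    · exact Ideal.le_radical hz0
    · exact Ideal.le_radical hz1
  intro p hp
  rw [Set.mem_inter_iff, PrimeSpectrum.mem_zeroLocus, PrimeSpectrum.mem_zeroLocus] at hp
  rw [PrimeSpectrum.mem_zeroLocus]
  have hsup : I1 ⊔ I2 ≤ p.asIdeal := sup_le hp.1 hp.2
  have hrad : (I1 ⊔ I2).radical ≤ p.asIdeal :=
    p.isPrime.radical_le_iff.mpr hsup
  exact fun x hx => hrad (hI0 hx)
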